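/- Let d ≥ 1 be an integer and let α, β, c > 0 satisfy α > d and αβ > d. Then ∫_{ℝ^d} ∫₁^∞ (1 − exp(−c w / ‖x‖^α)) β w^{−β−1} dw dx = θ_d · (αβ/(αβ − d)) · c^{d/α} · Γ(1 − d/α), where θ_d is the Lebesgue volume of the unit Euclidean ball in ℝ^d. (For d = 2, θ_2 = π and the constant equals the paper's c₀/η^{d/α} = 2παβ/(d(αβ−d)) Γ(1−d/α) with c = η w₀, i.e. the integral equals c₀ w₀^{d/α}.) -/

import Mathlib

open MeasureTheory Set Real Filter Topology

-- integrability of the main integrand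
lemma I1 {s : ℝ} (hs0 : 0 < s) (hs1 : s < 1) :
    IntegrableOn (fun t : ℝ => t ^ (-s - 1) * (1 - Real.exp (-t))) (Ioi 0) := by
  have hm : Measurable (fun t : ℝ => t ^ (-s - 1) * (1 - Real.exp (-t))) :=
    by fun_prop
  rw [← Ioc_union_Ioi_eq_Ioi (zero_le_one (α := ℝ)), integrableOn_union]
  constructor
  · rw [integrableOn_Ioc_iff_integrableOn_Ioo]
    have hg : IntegrableOn (fun t : ℝ => t ^ (-s)) (Ioo (0:ℝ) 1) :=
      (intervalIntegral.integrableOn_Ioo_rpow_iff zero_lt_one).2 (by linarith)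
    refine hg.mono' hm.aestronglyMeasurable ?_
    filter_upwards [ae_restrict_mem measurableSet_Ioo] with t ht
    have ht0 : 0 < t := ht.1
    have h1 : 0 ≤ 1 - Real.exp (-t) := by
      have : Real.exp (-t) ≤ 1 := by
        rw [Real.exp_le_one_iff]; linarith
      linarith
    have h2 : 1 - Real.exp (-t) ≤ t := by
      have := Real.add_one_le_exp (-t); linarith
    rw [Real.norm_eq_abs, abs_of_nonneg (mul_nonneg (Real.rpow_nonneg ht0.le _) h1)]
    calc t ^ (-s - 1) * (1 - Real.exp (-t)) ≤ t ^ (-s - 1) * t :=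
          mul_le_mul_of_nonneg_left h2 (Real.rpow_nonneg ht0.le _)
      _ = t ^ (-s) := by
          rw [← Real.rpow_add_one ht0.ne']; ring_nf
  · have hg : IntegrableOn (fun t : ℝ => t ^ (-s - 1)) (Ioi (1:ℝ)) :=
      integrableOn_Ioi_rpow_of_lt (by linarith) zero_lt_one
    refine hg.mono' hm.aestronglyMeasurable ?_
    filter_upwards [ae_restrict_mem measurableSet_Ioi] with t ht
    have ht0 : (0:ℝ) < t := lt_trans zero_lt_one ht
    have h1 : 0 ≤ 1 - Real.exp (-t) := by
      have : Real.exp (-t) ≤ 1 := by rw [Real.exp_le_one_iff]; linarith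
      linarith
    rw [Real.norm_eq_abs, abs_of_nonneg (mul_nonneg (Real.rpow_nonneg ht0.le _) h1)]
    nlinarith [Real.rpow_nonneg ht0.le (-s-1), Real.exp_pos (-t)]

lemma key1 {s : ℝ} (hs0 : 0 < s) (hs1 : s < 1) :
    ∫ t in Ioi (0:ℝ), t ^ (-s - 1) * (1 - Real.exp (-t)) = Real.Gamma (1 - s) / s := by
  have hs' : s ≠ 0 := hs0.ne'
  set Φ : ℝ → ℝ := fun t => -(1/s) * (t ^ (-s) * (1 - Real.exp (-t))) with hΦ
  set f' : ℝ → ℝ := fun t => t ^ (-s - 1) * (1 - Real.exp (-t)) - (1/s) * (Real.exp (-t) * t ^ (-s)) with hf'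
  have hΓ : IntegrableOn (fun t : ℝ => Real.exp (-t) * t ^ (-s)) (Ioi 0) := by
    have := Real.GammaIntegral_convergent (s := 1 - s) (by linarith)
    simpa [show (1:ℝ) - s - 1 = -s by ring] using this
  have hint1 := I1 hs0 hs1
  have hf'int : IntegrableOn f' (Ioi 0) := hint1.sub (hΓ.const_mul _)
  have hderiv : ∀ x ∈ Ioi (0:ℝ), HasDerivAt Φ (f' x) x := by
    intro x hx
    have hx0 : (0:ℝ) < x := hx
    have h1 : HasDerivAt (fun t : ℝ => t ^ (-s)) ((-s) * x ^ (-s - 1)) x :=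
      Real.hasDerivAt_rpow_const (Or.inl hx0.ne')
    have h2 : HasDerivAt (fun t : ℝ => 1 - Real.exp (-t)) (Real.exp (-x)) x := by
      have := ((Real.hasDerivAt_exp (-x)).comp x ((hasDerivAt_id x).neg)).const_sub 1
      simpa using this
    have h3 := (h1.mul h2).const_mul (-(1/s))
    have h4 : -(1/s) * ((-s) * x ^ (-s - 1) * (1 - Real.exp (-x)) + x ^ (-s) * Real.exp (-x))
        = f' x := by rw [hf']; field_simp; ring
    rw [← h4]; exact h3
  have hlim : Tendsto Φ atTop (𝓝 (0:ℝ)) := by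
    have h1 : Tendsto (fun t : ℝ => t ^ (-s)) atTop (𝓝 0) := tendsto_rpow_neg_atTop hs0
    have h2 : Tendsto (fun t : ℝ => 1 - Real.exp (-t)) atTop (𝓝 (1 - 0)) :=
      tendsto_const_nhds.sub (Real.tendsto_exp_neg_atTop_nhds_zero)
    rw [hΦ, show (0:ℝ) = -(1/s) * (0 * (1 - 0)) by ring]
    exact (h1.mul h2).const_mul _
  have hΦ0 : Φ 0 = 0 := by simp [hΦ]
  have hcont : ContinuousWithinAt Φ (Ici 0) 0 := by
    rw [ContinuousWithinAt, hΦ0]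
    apply squeeze_zero_norm' (a := fun t => (1/s) * t ^ (1 - s))
    · filter_upwards [self_mem_nhdsWithin] with t (ht : (0:ℝ) ≤ t)
      rcases eq_or_lt_of_le ht with h | h
      · rw [← h]
        simp [Φ, Real.zero_rpow ((by linarith : (0:ℝ) < 1 - s).ne')]
      · have h1 : 0 ≤ 1 - Real.exp (-t) := by
          have : Real.exp (-t) ≤ 1 := by rw [Real.exp_le_one_iff]; linarith
          linarith
        have h2 : 1 - Real.exp (-t) ≤ t := by have := Real.add_one_le_exp (-t); linarith
        have e1 : ‖Φ t‖ = (1/s) * (t ^ (-s) * (1 - Real.exp (-t))) := by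
          show |(-(1/s) * (t ^ (-s) * (1 - Real.exp (-t))))| = _
          rw [abs_mul, abs_neg, abs_of_nonneg (by positivity : (0:ℝ) ≤ 1/s),
            abs_of_nonneg (mul_nonneg (Real.rpow_nonneg h.le _) h1)]
        rw [e1]
        have hb : t ^ (-s) * (1 - Real.exp (-t)) ≤ t ^ (1 - s) := by
          calc t ^ (-s) * (1 - Real.exp (-t)) ≤ t ^ (-s) * t :=
                mul_le_mul_of_nonneg_left h2 (Real.rpow_nonneg h.le _)
            _ = t ^ (1 - s) := by rw [← Real.rpow_add_one h.ne']; ring_nf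
        exact mul_le_mul_of_nonneg_left hb (by positivity)
    · have h1 : Tendsto (fun t : ℝ => t ^ (1 - s)) (𝓝[Ici (0:ℝ)] 0) (𝓝 ((0:ℝ) ^ (1 - s))) :=
        ((Real.continuousAt_rpow_const 0 (1-s) (Or.inr (by linarith))).continuousWithinAt)
      have := h1.const_mul (1/s)
      simpa [Real.zero_rpow ((by linarith : (0:ℝ) < 1 - s).ne')] using this
  have hI : ∫ x in Ioi (0:ℝ), f' x = 0 - Φ 0 :=
    integral_Ioi_of_hasDerivAt_of_tendsto hcont hderiv hf'int hlim
  have expand : ∀ t : ℝ, t ^ (-s - 1) * (1 - Real.exp (-t))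
      = f' t + (1/s) * (Real.exp (-t) * t ^ (-s)) := by intro t; simp [hf']
  calc ∫ t in Ioi (0:ℝ), t ^ (-s - 1) * (1 - Real.exp (-t))
      = ∫ t in Ioi (0:ℝ), (f' t + (1/s) * (Real.exp (-t) * t ^ (-s))) := by
        simp_rw [← expand]
    _ = (∫ t in Ioi (0:ℝ), f' t) + (1/s) * ∫ t in Ioi (0:ℝ), Real.exp (-t) * t ^ (-s) := by
        rw [integral_add hf'int (hΓ.const_mul _), integral_const_mul]
    _ = Real.Gamma (1 - s) / s := by
        rw [hI, hΦ0, Real.Gamma_eq_integral (by linarith : (0:ℝ) < 1 - s)]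
        simp_rw [show (1:ℝ) - s - 1 = -s by ring]
        ring

lemma key2 {s a : ℝ} (hs0 : 0 < s) (hs1 : s < 1) (ha : 0 < a) :
    ∫ t in Ioi (0:ℝ), t ^ (-s - 1) * (1 - Real.exp (-(a * t)))
      = a ^ s * (Real.Gamma (1 - s) / s) := by
  have h := integral_comp_mul_left_Ioi
    (fun t : ℝ => t ^ (-s - 1) * (1 - Real.exp (-t))) 0 ha
  rw [mul_zero, smul_eq_mul, key1 hs0 hs1] at h
  have step : ∫ t in Ioi (0:ℝ), t ^ (-s - 1) * (1 - Real.exp (-(a * t)))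
      = ∫ t in Ioi (0:ℝ), a ^ (s + 1) * ((a * t) ^ (-s - 1) * (1 - Real.exp (-(a * t)))) := by
    refine setIntegral_congr_fun measurableSet_Ioi (fun t ht => ?_)
    have ht0 : (0:ℝ) < t := ht
    rw [Real.mul_rpow ha.le ht0.le, ← mul_assoc, ← mul_assoc,
      ← Real.rpow_add ha, show s + 1 + (-s - 1) = 0 by ring, Real.rpow_zero, one_mul]
  rw [step, integral_const_mul, h, ← mul_assoc, ← Real.rpow_neg_one a, ← Real.rpow_add ha]
  norm_num

lemma keyint (d : ℕ) {α a : ℝ} (hd : 1 ≤ d) (hαd : (d:ℝ) < α) (ha : 0 < a) :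
    IntegrableOn (fun r : ℝ => r ^ (d - 1) * (1 - Real.exp (-(a / r ^ α)))) (Ioi 0) := by
  have hm : Measurable (fun r : ℝ => r ^ (d - 1) * (1 - Real.exp (-(a / r ^ α)))) := by
    fun_prop
  rw [← Ioc_union_Ioi_eq_Ioi (zero_le_one (α := ℝ)), integrableOn_union]
  have hd0 : (0:ℝ) < d := by exact_mod_cast Nat.pos_of_ne_zero (by omega)
  constructor
  · refine Integrable.mono' (g := fun _ : ℝ => (1:ℝ)) ?_ hm.aestronglyMeasurable ?_
    · exact integrableOn_const measure_Ioc_lt_top.ne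
    · filter_upwards [ae_restrict_mem measurableSet_Ioc] with t ht
      have ht0 : 0 < t := ht.1
      have h1 : 0 ≤ 1 - Real.exp (-(a / t ^ α)) := by
        have : Real.exp (-(a / t ^ α)) ≤ 1 := by
          rw [Real.exp_le_one_iff]
          have : 0 ≤ a / t ^ α := by positivity
          linarith
        linarith
      have h2 : 1 - Real.exp (-(a / t ^ α)) ≤ 1 := by
        have := Real.exp_pos (-(a / t ^ α)); linarith
      have h3 : t ^ (d - 1) ≤ 1 := pow_le_one₀ ht0.le ht.2
      rw [Real.norm_eq_abs, abs_of_nonneg (mul_nonneg (by positivity) h1)]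
      calc t ^ (d-1) * (1 - Real.exp (-(a / t ^ α))) ≤ 1 * 1 :=
        mul_le_mul h3 h2 h1 zero_le_one
      _ = 1 := one_mul 1
  · refine Integrable.mono' (g := fun t : ℝ => a * t ^ ((d:ℝ) - 1 - α)) ?_
      hm.aestronglyMeasurable ?_
    · exact (integrableOn_Ioi_rpow_of_lt (by linarith) zero_lt_one).const_mul a
    · filter_upwards [ae_restrict_mem measurableSet_Ioi] with t ht
      have ht0 : (0:ℝ) < t := lt_trans zero_lt_one ht
      have h1 : 0 ≤ 1 - Real.exp (-(a / t ^ α)) := by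
        have : Real.exp (-(a / t ^ α)) ≤ 1 := by
          rw [Real.exp_le_one_iff]
          have : 0 ≤ a / t ^ α := by positivity
          linarith
        linarith
      have h2 : 1 - Real.exp (-(a / t ^ α)) ≤ a / t ^ α := by
        have := Real.add_one_le_exp (-(a / t ^ α)); linarith
      rw [Real.norm_eq_abs, abs_of_nonneg (mul_nonneg (by positivity) h1)]
      calc t ^ (d-1) * (1 - Real.exp (-(a / t ^ α))) ≤ t ^ (d-1) * (a / t ^ α) :=
            mul_le_mul_of_nonneg_left h2 (by positivity)
        _ = a * t ^ ((d:ℝ) - 1 - α) := by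
            rw [← Real.rpow_natCast t (d-1), Nat.cast_sub hd, Nat.cast_one,
              div_eq_mul_inv, ← Real.rpow_neg ht0.le, ← mul_assoc,
              mul_comm (t ^ ((d:ℝ) - 1)) a, mul_assoc, ← Real.rpow_add ht0]
            ring_nf

lemma key3 (d : ℕ) {α a : ℝ} (hd : 1 ≤ d) (hαd : (d:ℝ) < α) (ha : 0 < a) :
    ∫ r in Ioi (0:ℝ), r ^ (d - 1) * (1 - Real.exp (-(a / r ^ α)))
      = a ^ ((d:ℝ)/α) * Real.Gamma (1 - (d:ℝ)/α) / d := by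
  have hd0 : (0:ℝ) < d := by exact_mod_cast Nat.pos_of_ne_zero (by omega)
  have hα : 0 < α := lt_trans hd0 hαd
  set s : ℝ := (d:ℝ)/α with hs
  have hs0 : 0 < s := by positivity
  have hs1 : s < 1 := (div_lt_one hα).2 hαd
  have hsα : s * α = d := div_mul_cancel₀ _ hα.ne'
  have h := integral_comp_rpow_Ioi
    (fun y : ℝ => (1/α) * (y ^ (-s - 1) * (1 - Real.exp (-(a * y))))) (p := -α)
    (by linarith : -α ≠ 0)
  rw [integral_const_mul, key2 hs0 hs1 ha] at h
  rw [show ∫ r in Ioi (0:ℝ), r ^ (d - 1) * (1 - Real.exp (-(a / r ^ α)))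
      = ∫ x in Ioi (0:ℝ), (|(-α)| * x ^ (-α - 1)) •
        ((1/α) * ((x ^ (-α)) ^ (-s - 1) * (1 - Real.exp (-(a * x ^ (-α)))))) from ?_, h]
  · have hα' : α ≠ 0 := hα.ne'
    have hs' : s ≠ 0 := hs0.ne'
    rw [← hsα]
    ring
  · refine setIntegral_congr_fun measurableSet_Ioi (fun x hx => ?_)
    have hx0 : (0:ℝ) < x := hx
    have e1 : a / x ^ α = a * x ^ (-α) := by
      rw [Real.rpow_neg hx0.le, div_eq_mul_inv]
    have e2 : (x ^ (-α)) ^ (-s - 1) = x ^ (α * (s + 1)) := by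
      rw [← Real.rpow_mul hx0.le]
      congr 1
      ring
    have e3 : (x:ℝ) ^ (d - 1) = x ^ ((d:ℝ) - 1) := by
      rw [← Real.rpow_natCast x (d-1), Nat.cast_sub hd, Nat.cast_one]
    have e5 : x ^ (-α - 1) * x ^ (α * (s + 1)) = x ^ ((d:ℝ) - 1) := by
      rw [← Real.rpow_add hx0]
      congr 1
      rw [← hsα]; ring
    rw [smul_eq_mul, abs_of_nonpos (by linarith : -α ≤ 0), neg_neg, e1, e2, e3, ← e5]
    field_simp

lemma key4 (d : ℕ) (hd : 1 ≤ d) {α β c w : ℝ} (hα : 0 < α) (hc : 0 < c)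
    (hαd : (d:ℝ) < α) (hw : 1 < w) :
    ∫ r in Ioi (0:ℝ), r ^ (d - 1) * ((1 - Real.exp (-(c * w / r ^ α))) * (β * w ^ (-β - 1)))
      = (c ^ ((d:ℝ)/α) * Real.Gamma (1 - (d:ℝ)/α) / d * β) * w ^ ((d:ℝ)/α - β - 1) := by
  have hw0 : (0:ℝ) < w := lt_trans one_pos hw
  have hcw : 0 < c * w := mul_pos hc hw0
  simp_rw [← mul_assoc]
  rw [integral_mul_const, integral_mul_const, key3 d hd hαd hcw,
    Real.mul_rpow hc.le hw0.le, show (d:ℝ)/α - β - 1 = (d:ℝ)/α + (-β - 1) by ring,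
    Real.rpow_add hw0]
  ring

theorem integral_pareto_connection_function
    (d : ℕ) (hd : 1 ≤ d) (α β c : ℝ)
    (hα : 0 < α) (hβ : 0 < β) (hc : 0 < c)
    (hαd : (d : ℝ) < α) (hαβ : (d : ℝ) < α * β) :
    ∫ x : EuclideanSpace ℝ (Fin d),
        ∫ w in Ioi (1 : ℝ), (1 - Real.exp (-(c * w / ‖x‖ ^ α))) * (β * w ^ (-β - 1)) =
      (volume (Metric.closedBall (0 : EuclideanSpace ℝ (Fin d)) 1)).toReal *
        (α * β / (α * β - d)) * c ^ ((d : ℝ) / α) * Real.Gamma (1 - (d : ℝ) / α) := by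
  have hd0 : (0:ℝ) < d := by exact_mod_cast Nat.pos_of_ne_zero (by omega)
  haveI : Nonempty (Fin d) := ⟨⟨0, hd⟩⟩
  haveI : Nontrivial (EuclideanSpace ℝ (Fin d)) := inferInstance
  set s : ℝ := (d:ℝ)/α with hs
  have hs0 : 0 < s := by positivity
  have hsα : s * α = d := div_mul_cancel₀ _ hα.ne'
  have hsβ : s < β := by
    rw [hs, div_lt_iff₀ hα]; linarith [mul_comm α β]
  have hβs : 0 < β - s := by linarith
  clear_value s
  -- polar coordinates
  have hpolar := integral_fun_norm_addHaar (volume : Measure (EuclideanSpace ℝ (Fin d)))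
    (fun r : ℝ => ∫ w in Ioi (1:ℝ), (1 - Real.exp (-(c * w / r ^ α))) * (β * w ^ (-β - 1)))
  rw [finrank_euclideanSpace_fin] at hpolar
  have goal_lhs : (∫ x : EuclideanSpace ℝ (Fin d),
        ∫ w in Ioi (1:ℝ), (1 - Real.exp (-(c * w / ‖x‖ ^ α))) * (β * w ^ (-β - 1)))
      = ∫ x : EuclideanSpace ℝ (Fin d), (fun r : ℝ => ∫ w in Ioi (1:ℝ),
          (1 - Real.exp (-(c * w / r ^ α))) * (β * w ^ (-β - 1))) ‖x‖ := rfl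
  rw [goal_lhs, hpolar]
  simp only [nsmul_eq_mul, smul_eq_mul]
  -- pull the power inside the inner integral
  rw [show (∫ y in Ioi (0:ℝ), y ^ (d - 1) * ∫ w in Ioi (1:ℝ),
        (1 - Real.exp (-(c * w / y ^ α))) * (β * w ^ (-β - 1)))
      = ∫ y in Ioi (0:ℝ), ∫ w in Ioi (1:ℝ),
        y ^ (d - 1) * ((1 - Real.exp (-(c * w / y ^ α))) * (β * w ^ (-β - 1)))
    from setIntegral_congr_fun measurableSet_Ioi fun y _ => (integral_const_mul _ _).symm]
  -- Fubini
  have hFmeas : AEStronglyMeasurable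
      (Function.uncurry fun r w : ℝ => r ^ (d - 1) *
        ((1 - Real.exp (-(c * w / r ^ α))) * (β * w ^ (-β - 1))))
      ((volume.restrict (Ioi (0:ℝ))).prod (volume.restrict (Ioi (1:ℝ)))) := by
    apply Measurable.aestronglyMeasurable
    fun_prop
  have hslice : ∀ w : ℝ, 1 < w → IntegrableOn (fun r : ℝ => r ^ (d - 1) *
      ((1 - Real.exp (-(c * w / r ^ α))) * (β * w ^ (-β - 1)))) (Ioi 0) := by
    intro w hw
    have hcw : 0 < c * w := mul_pos hc (lt_trans one_pos hw)
    have := (keyint d hd hαd hcw).mul_const (β * w ^ (-β - 1))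
    simp only [mul_assoc] at this
    exact this
  have hnn : ∀ w : ℝ, 1 < w → ∀ r : ℝ, 0 < r →
      0 ≤ r ^ (d - 1) * ((1 - Real.exp (-(c * w / r ^ α))) * (β * w ^ (-β - 1))) := by
    intro w hw r hr
    have hw0 : (0:ℝ) < w := lt_trans one_pos hw
    have h1 : Real.exp (-(c * w / r ^ α)) ≤ 1 := by
      rw [Real.exp_le_one_iff]
      have : 0 ≤ c * w / r ^ α := by positivity
      linarith
    have h2 : (0:ℝ) ≤ β * w ^ (-β - 1) := by positivity
    have h3 : (0:ℝ) ≤ r ^ (d-1) := by positivity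
    exact mul_nonneg h3 (mul_nonneg (by linarith) h2)
  have hwcomp : ∀ w : ℝ, 1 < w → (∫ r in Ioi (0:ℝ), r ^ (d - 1) *
        ((1 - Real.exp (-(c * w / r ^ α))) * (β * w ^ (-β - 1))))
      = (c ^ s * Real.Gamma (1 - s) / d * β) * w ^ (s - β - 1) := by
    intro w hw
    rw [hs]
    exact key4 d hd hα hc hαd hw
  have hFint : Integrable (Function.uncurry fun r w : ℝ => r ^ (d - 1) *
        ((1 - Real.exp (-(c * w / r ^ α))) * (β * w ^ (-β - 1))))
      ((volume.restrict (Ioi (0:ℝ))).prod (volume.restrict (Ioi (1:ℝ)))) := by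
    rw [integrable_prod_iff' hFmeas]
    constructor
    · filter_upwards [ae_restrict_mem measurableSet_Ioi] with w hw
      exact hslice w hw
    · have hbase : IntegrableOn (fun w : ℝ =>
          (c ^ s * Real.Gamma (1 - s) / d * β) * w ^ (s - β - 1)) (Ioi 1) :=
        (integrableOn_Ioi_rpow_of_lt (by linarith) one_pos).const_mul _
      refine hbase.congr ?_
      filter_upwards [ae_restrict_mem measurableSet_Ioi] with w hw
      rw [← hwcomp w hw]
      refine setIntegral_congr_fun measurableSet_Ioi (fun r hr => ?_) |>.symm
      exact norm_of_nonneg (hnn w hw r hr)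
  rw [MeasureTheory.integral_integral_swap hFint]
  rw [setIntegral_congr_fun measurableSet_Ioi (fun w hw => hwcomp w hw),
    integral_const_mul, integral_Ioi_rpow_of_lt (by linarith) one_pos,
    Real.one_rpow]
  rw [Measure.addHaar_closedBall_eq_addHaar_ball, ← measureReal_def]
  have h6 : α * β - d = α * (β - s) := by rw [← hsα]; ring
  rw [h6]
  have e7 : -1 / (s - β - 1 + 1) = 1 / (β - s) := by
    rw [show s - β - 1 + 1 = -(β - s) by ring, div_neg, neg_div, neg_neg]
  have e8 : α * β / (α * (β - s)) = β / (β - s) := mul_div_mul_left _ _ hα.ne'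
  rw [e7, e8]
  field_simp
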